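/- Let X be an ℝ^{ν₀}-valued random variable, let f : ℝ^{ν₀} → ℝ^{d} and ψ : ℝ^{d} → ℝ^{k} be Borel measurable, let D_ψ := { y ∈ ℝ^{d} : ψ is discontinuous at y } be the discontinuity set of ψ, and assume P(f(X) ∈ D_ψ) = 0. Then there exists a sequence of feedforward neural networks (F_n)_{n∈ℕ} with F_n ∈ Q_n such that for every ε > 0, lim_{n→∞} P(‖ψ(F_n(X)) − ψ(f(X))‖ > ε) = 0. -/

import Mathlib

open Filter MeasureTheory

/-- The sigmoid activation function. -/
noncomputable def sigmoid (z : ℝ) : ℝ := (1 + Real.exp (-z))⁻¹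

/-- A fully connected feedforward neural network with `L` hidden layers of common
width `ν`, input dimension `ν₀` and output dimension `k`: the trainable weights and
biases of each affine layer. -/
structure MLP (L ν ν₀ k : ℕ) where
  w1 : Matrix (Fin ν) (Fin ν₀) ℝ
  b1 : Fin ν → ℝ
  wmid : Fin (L - 1) → Matrix (Fin ν) (Fin ν) ℝ
  bmid : Fin (L - 1) → (Fin ν → ℝ)
  wout : Matrix (Fin k) (Fin ν) ℝ
  bout : Fin k → ℝ

/-- The function computed by an FNN: compositions of affine maps with componentwise
sigmoid activations on the hidden layers, and no activation at the output layer. -/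
noncomputable def MLP.eval {L ν ν₀ k : ℕ} (net : MLP L ν ν₀ k)
    (x : Fin ν₀ → ℝ) : Fin k → ℝ :=
  net.wout.mulVec
    ((List.finRange (L - 1)).foldl
      (fun v i => fun j => sigmoid ((net.wmid i).mulVec v j + net.bmid i j))
      (fun j => sigmoid (net.w1.mulVec x j + net.b1 j)))
    + net.bout

/-- `F` belongs to the class `Q_n` of FNNs with depth `L` and hidden width `ν n`. -/
def InQ (L : ℕ) (ν : ℕ → ℕ) (n ν₀ k : ℕ)
    (F : (Fin ν₀ → ℝ) → (Fin k → ℝ)) : Prop :=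
  ∃ net : MLP L (ν n) ν₀ k, F = net.eval


open scoped ENNReal NNReal

set_option linter.unusedVariables false

section NNAux


lemma continuous_sigmoid' : Continuous sigmoid := by
  apply Continuous.inv₀
  · continuity
  · intro z; positivity

lemma exp_sigmoid_close {M c t : ℝ} (ht : t ≤ M) :
    |Real.exp c * sigmoid (t - c) - Real.exp t| ≤ Real.exp (2 * M - c) := by
  have h1 : (0:ℝ) < 1 + Real.exp (c - t) := by positivity
  have h3 : Real.exp t * Real.exp (c - t) = Real.exp c := by
    rw [← Real.exp_add]; ring_nf
  have key : Real.exp c * sigmoid (t - c) - Real.exp t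
      = -(Real.exp t / (1 + Real.exp (c - t))) := by
    unfold sigmoid
    rw [neg_sub]
    field_simp
    linarith [h3]
  rw [key, abs_neg, abs_of_nonneg (by positivity)]
  have h2 : Real.exp t / (1 + Real.exp (c - t)) ≤ Real.exp t / Real.exp (c - t) := by
    apply div_le_div_of_nonneg_left (Real.exp_pos t).le (Real.exp_pos _)
    linarith
  calc Real.exp t / (1 + Real.exp (c - t)) ≤ Real.exp t / Real.exp (c - t) := h2
    _ = Real.exp (t - (c - t)) := (Real.exp_sub _ _).symm
    _ ≤ Real.exp (2 * M - c) := by apply Real.exp_le_exp.2; linarith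

def Real1 (m d : ℕ) (F : (Fin m → ℝ) → Fin d → ℝ) : Prop :=
  ∃ (n : ℕ) (A : Fin d → Fin n → ℝ) (w : Fin n → Fin m → ℝ) (b : Fin n → ℝ) (c : Fin d → ℝ),
    F = fun x l => (∑ i, A l i * sigmoid ((∑ j, w i j * x j) + b i)) + c l

lemma Real1.const (m d : ℕ) (c : Fin d → ℝ) : Real1 m d (fun _ l => c l) :=
  ⟨0, fun _ => Fin.elim0, Fin.elim0, Fin.elim0, c, by funext x l; simp⟩

lemma Real1.add {m d : ℕ} {F G : (Fin m → ℝ) → Fin d → ℝ} (hF : Real1 m d F)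
    (hG : Real1 m d G) : Real1 m d (fun x l => F x l + G x l) := by
  obtain ⟨n1, A1, w1, b1, c1, rfl⟩ := hF
  obtain ⟨n2, A2, w2, b2, c2, rfl⟩ := hG
  refine ⟨n1 + n2, fun l => Fin.append (A1 l) (A2 l), Fin.append w1 w2, Fin.append b1 b2,
    fun l => c1 l + c2 l, ?_⟩
  funext x l
  simp only [Fin.sum_univ_add, Fin.append_left, Fin.append_right]
  ring

lemma Real1.finsum {m d : ℕ} {ι : Type*} (s : Finset ι) (G : ι → (Fin m → ℝ) → Fin d → ℝ)
    (h : ∀ i ∈ s, Real1 m d (G i)) :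
    Real1 m d (fun x l => ∑ i ∈ s, G i x l) := by
  classical
  induction s using Finset.induction with
  | empty => simpa using Real1.const m d 0
  | @insert a s hni ih =>
      have := (h a (Finset.mem_insert_self a s)).add
        (ih (fun i hi => h i (Finset.mem_insert_of_mem hi)))
      simpa [Finset.sum_insert hni] using this

lemma sum_dite_padded {ν ν' : ℕ} (h : ν ≤ ν') (g : Fin ν → ℝ) :
    ∑ i : Fin ν', (if h2 : (i:ℕ) < ν then g ⟨i, h2⟩ else 0) = ∑ i : Fin ν, g i := by
  have e1 : ∑ i : Fin ν', (if h2 : (i:ℕ) < ν then g ⟨i, h2⟩ else 0)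
      = ∑ i ∈ Finset.range ν', (if h2 : i < ν then g ⟨i, h2⟩ else 0) :=
    Fin.sum_univ_eq_sum_range (fun i => if h2 : i < ν then g ⟨i, h2⟩ else 0) ν'
  have e2 : ∑ i : Fin ν, g i
      = ∑ i ∈ Finset.range ν, (if h2 : i < ν then g ⟨i, h2⟩ else 0) := by
    rw [← Fin.sum_univ_eq_sum_range (fun i => if h2 : i < ν then g ⟨i, h2⟩ else 0) ν]
    exact Finset.sum_congr rfl (fun i _ => by rw [dif_pos i.2])
  rw [e1, e2]
  rw [Finset.sum_subset (Finset.range_subset_range.2 h)]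
  intro x _ hx2
  rw [dif_neg]
  simpa using hx2

section SW
variable {m : ℕ}

lemma exp_span_dense {K : Set (Fin m → ℝ)} (hK : IsCompact K)
    (g : (Fin m → ℝ) → ℝ) (hg : Continuous g) {ε : ℝ} (hε : 0 < ε) :
    ∃ (n : ℕ) (a : Fin n → ℝ) (w : Fin n → Fin m → ℝ),
      ∀ x ∈ K, |(∑ i, a i * Real.exp (∑ j, w i j * x j)) - g x| ≤ ε := by
  haveI : CompactSpace K := isCompact_iff_compactSpace.mp hK
  let expFn : (Fin m → ℝ) → C(K, ℝ) := fun w =>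
    ⟨fun x => Real.exp (∑ j, w j * (x : Fin m → ℝ) j), by
      apply Real.continuous_exp.comp
      apply continuous_finset_sum
      intro j _
      exact continuous_const.mul ((continuous_apply j).comp continuous_subtype_val)⟩
  have expFn_mul : ∀ v w, expFn v * expFn w = expFn (v + w) := by
    intro v w
    ext x
    simp only [ContinuousMap.mul_apply, ContinuousMap.coe_mk, expFn, ← Real.exp_add,
      Pi.add_apply, add_mul, Finset.sum_add_distrib]
  let Esub : Submodule ℝ C(K, ℝ) := Submodule.span ℝ (Set.range expFn)
  have h_one : (1 : C(K,ℝ)) ∈ Esub := by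
    have : expFn 0 = 1 := by
      ext x; simp [expFn]
    rw [← this]
    exact Submodule.subset_span (Set.mem_range_self 0)
  have h_mul : ∀ φ χ : C(K,ℝ), φ ∈ Esub → χ ∈ Esub → φ * χ ∈ Esub := by
    have key : ∀ v, ∀ χ ∈ Esub, expFn v * χ ∈ Esub := by
      intro v χ hχ
      induction hχ using Submodule.span_induction with
      | mem ψ hψ =>
          obtain ⟨w, rfl⟩ := hψ
          rw [expFn_mul]
          exact Submodule.subset_span (Set.mem_range_self _)
      | zero => rw [mul_zero]; exact Submodule.zero_mem _
      | add ψ₁ ψ₂ h₁ h₂ p₁ p₂ => rw [mul_add]; exact Submodule.add_mem _ p₁ p₂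
      | smul r ψ hψ pψ => rw [mul_smul_comm]; exact Submodule.smul_mem _ _ pψ
    intro φ χ hφ hχ
    induction hφ using Submodule.span_induction with
    | mem ψ hψ => obtain ⟨w, rfl⟩ := hψ; exact key w χ hχ
    | zero => rw [zero_mul]; exact Submodule.zero_mem _
    | add ψ₁ ψ₂ h₁ h₂ p₁ p₂ => rw [add_mul]; exact Submodule.add_mem _ p₁ p₂
    | smul r ψ hψ pψ => rw [smul_mul_assoc]; exact Submodule.smul_mem _ _ pψ
  let Alg : Subalgebra ℝ C(K,ℝ) := Esub.toSubalgebra h_one h_mul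
  have hsep : Alg.SeparatesPoints := by
    intro x y hxy
    have hne : (x : Fin m → ℝ) ≠ (y : Fin m → ℝ) := fun h => hxy (Subtype.ext h)
    obtain ⟨j, hj⟩ := Function.ne_iff.mp hne
    refine ⟨_, ⟨expFn (Pi.single j 1),
      Submodule.subset_span (Set.mem_range_self _), rfl⟩, ?_⟩
    have hv : ∀ z : K, expFn (Pi.single j 1) z = Real.exp ((z : Fin m → ℝ) j) := by
      intro z
      simp [expFn, Pi.single_apply, ite_mul, Finset.sum_ite_eq']
    simp only [hv]
    exact fun h => hj (Real.exp_eq_exp.mp h)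
  obtain ⟨⟨φ, hφ⟩, hclose⟩ :=
    ContinuousMap.exists_mem_subalgebra_near_continuous_of_separatesPoints Alg hsep
      (fun x : K => g x) (hg.comp continuous_subtype_val) ε hε
  have hφE : φ ∈ Esub := hφ
  obtain ⟨n, aco, gen, hsum⟩ := Submodule.mem_span_set'.mp hφE
  have hw : ∀ i : Fin n, ∃ w, expFn w = (gen i : C(K,ℝ)) := fun i => (gen i).2
  choose w hwspec using hw
  refine ⟨n, aco, w, ?_⟩
  intro x hx
  have hφx : φ ⟨x, hx⟩ = ∑ i, aco i * Real.exp (∑ j, w i j * x j) := by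
    have := congrArg (fun ψ : C(K,ℝ) => ψ ⟨x, hx⟩) hsum
    simp only [ContinuousMap.coe_sum, Finset.sum_apply, ContinuousMap.coe_smul, Pi.smul_apply,
      smul_eq_mul] at this
    rw [← this]
    apply Finset.sum_congr rfl
    intro i _
    rw [← hwspec i]
    rfl
  have := hclose ⟨x, hx⟩
  rw [Real.norm_eq_abs] at this
  rw [← hφx]
  exact le_of_lt (by simpa using this)

end SW

lemma scalar_unit_dense {m : ℕ} {K : Set (Fin m → ℝ)} (hK : IsCompact K)
    (g0 : (Fin m → ℝ) → ℝ) (hg : Continuous g0) {ε : ℝ} (hε : 0 < ε) :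
    ∃ (n : ℕ) (a : Fin n → ℝ) (w : Fin n → Fin m → ℝ) (b : Fin n → ℝ),
      ∀ x ∈ K, |(∑ i, a i * sigmoid ((∑ j, w i j * x j) + b i)) - g0 x| ≤ ε := by
  obtain ⟨n, a, w, hexp⟩ := exp_span_dense hK g0 hg (half_pos hε)
  -- radius bound
  obtain ⟨R0, hR0⟩ := hK.isBounded.subset_closedBall 0
  set R : ℝ := max R0 0 with hRdef
  have hRnn : 0 ≤ R := le_max_right _ _
  have hcoord : ∀ x ∈ K, ∀ j, |x j| ≤ R := by
    intro x hx j
    have h1 : dist (x j) ((0 : Fin m → ℝ) j) ≤ dist x (0 : Fin m → ℝ) :=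
      dist_le_pi_dist x 0 j
    have h2 : dist x (0 : Fin m → ℝ) ≤ R0 := by
      simpa [Metric.mem_closedBall] using hR0 hx
    have : |x j| = dist (x j) ((0 : Fin m → ℝ) j) := by
      simp [Real.dist_eq]
    rw [this]
    exact le_trans (le_trans h1 h2) (le_max_left _ _)
  set M : ℝ := (∑ i, ∑ j, |w i j|) * R with hMdef
  have hM : ∀ i, ∀ x ∈ K, (∑ j, w i j * x j) ≤ M := by
    intro i x hx
    calc (∑ j, w i j * x j) ≤ ∑ j, |w i j| * R := by
          apply Finset.sum_le_sum
          intro j _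
          calc w i j * x j ≤ |w i j * x j| := le_abs_self _
            _ = |w i j| * |x j| := abs_mul _ _
            _ ≤ |w i j| * R := by
                exact mul_le_mul_of_nonneg_left (hcoord x hx j) (abs_nonneg _)
      _ = (∑ j, |w i j|) * R := by rw [Finset.sum_mul]
      _ ≤ M := by
          apply mul_le_mul_of_nonneg_right _ hRnn
          exact Finset.single_le_sum (f := fun i => ∑ j, |w i j|)
            (fun i _ => Finset.sum_nonneg fun j _ => abs_nonneg _) (Finset.mem_univ i)
  -- choose shift c
  have htend : Tendsto (fun c : ℝ => (∑ i, |a i|) * Real.exp (2 * M - c)) atTop (nhds 0) := by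
    have h1 : Tendsto (fun c : ℝ => 2 * M - c) atTop atBot := by
      apply tendsto_atBot_add_const_left
      exact tendsto_neg_atTop_atBot
    have := Real.tendsto_exp_atBot.comp h1
    simpa using this.const_mul (∑ i, |a i|)
  obtain ⟨c, hc⟩ := (htend.eventually_lt_const (half_pos hε)).exists
  refine ⟨n, fun i => a i * Real.exp c, w, fun _ => -c, ?_⟩
  intro x hx
  have hterm : ∀ i : Fin n,
      |a i * Real.exp c * sigmoid ((∑ j, w i j * x j) + -c) - a i * Real.exp (∑ j, w i j * x j)|
        ≤ |a i| * Real.exp (2 * M - c) := by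
    intro i
    have : a i * Real.exp c * sigmoid ((∑ j, w i j * x j) + -c)
        - a i * Real.exp (∑ j, w i j * x j)
        = a i * (Real.exp c * sigmoid ((∑ j, w i j * x j) - c)
            - Real.exp (∑ j, w i j * x j)) := by ring_nf
    rw [this, abs_mul]
    exact mul_le_mul_of_nonneg_left (exp_sigmoid_close (hM i x hx)) (abs_nonneg _)
  calc |(∑ i, a i * Real.exp c * sigmoid ((∑ j, w i j * x j) + -c)) - g0 x|
      ≤ |(∑ i, a i * Real.exp c * sigmoid ((∑ j, w i j * x j) + -c))
          - (∑ i, a i * Real.exp (∑ j, w i j * x j))|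
        + |(∑ i, a i * Real.exp (∑ j, w i j * x j)) - g0 x| := abs_sub_le _ _ _
    _ ≤ (∑ i, |a i| * Real.exp (2 * M - c)) + ε / 2 := by
        apply add_le_add _ (hexp x hx)
        rw [← Finset.sum_sub_distrib]
        exact le_trans (Finset.abs_sum_le_sum_abs _ _) (Finset.sum_le_sum fun i _ => hterm i)
    _ ≤ ε / 2 + ε / 2 := by
        refine add_le_add ?_ le_rfl
        rw [← Finset.sum_mul]
        exact hc.le
    _ = ε := add_halves ε

lemma real1_dense {m d : ℕ} {K : Set (Fin m → ℝ)} (hK : IsCompact K)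
    (g : (Fin m → ℝ) → Fin d → ℝ) (hg : Continuous g) {ε : ℝ} (hε : 0 < ε) :
    ∃ F, Real1 m d F ∧ ∀ x ∈ K, ∀ l, |F x l - g x l| ≤ ε := by
  classical
  have hcl : ∀ l : Fin d, Continuous (fun x => g x l) := fun l => (continuous_apply l).comp hg
  choose n a w b h using fun l : Fin d => scalar_unit_dense hK (fun x => g x l) (hcl l) hε
  set G : Fin d → (Fin m → ℝ) → Fin d → ℝ := fun l x l' =>
    if l' = l then (∑ i, a l i * sigmoid ((∑ j, w l i j * x j) + b l i)) else 0 with hGdef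
  have hG : ∀ l, Real1 m d (G l) := by
    intro l
    refine ⟨n l, fun l' i => if l' = l then a l i else 0, w l, b l, 0, ?_⟩
    funext x l'
    by_cases hll : l' = l <;> simp [hGdef, hll]
  refine ⟨fun x l' => ∑ l, G l x l', Real1.finsum Finset.univ G (fun l _ => hG l), ?_⟩
  intro x hx l
  have : (∑ l', G l' x l) = ∑ i, a l i * sigmoid ((∑ j, w l i j * x j) + b l i) := by
    rw [Finset.sum_eq_single l]
    · simp [hGdef]
    · intro l' _ hne
      simp [hGdef, Ne.symm hne]
    · intro h; exact absurd (Finset.mem_univ l) h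
  simp only []
  show |(∑ l', G l' x l) - g x l| ≤ ε
  rw [this]
  exact h l x hx

noncomputable def MLP.hidden {L ν m k : ℕ} (net : MLP L ν m k) (x : Fin m → ℝ) : Fin ν → ℝ :=
  (List.finRange (L - 1)).foldl
    (fun v i => fun j => sigmoid ((net.wmid i).mulVec v j + net.bmid i j))
    (fun j => sigmoid (net.w1.mulVec x j + net.b1 j))

lemma MLP.eval_apply {L ν m k : ℕ} (net : MLP L ν m k) (x : Fin m → ℝ) (l : Fin k) :
    net.eval x l = (∑ j, net.wout l j * net.hidden x j) + net.bout l := rfl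

lemma foldl_rel {α β γ : Type*} (R : α → β → Prop) (f : α → γ → α) (g : β → γ → β)
    (hstep : ∀ a b c, R a b → R (f a c) (g b c)) :
    ∀ (l : List γ) (a : α) (b : β), R a b → R (l.foldl f a) (l.foldl g b) := by
  intro l
  induction l with
  | nil => intro a b h; exact h
  | cons c cs ih => intro a b h; exact ih _ _ (hstep a b c h)

def MLP.pad {L ν m k : ℕ} (net : MLP L ν m k) (ν' : ℕ) (h : ν ≤ ν') : MLP L ν' m k where
  w1 := fun i j => if h2 : (i:ℕ) < ν then net.w1 ⟨i, h2⟩ j else 0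
  b1 := fun i => if h2 : (i:ℕ) < ν then net.b1 ⟨i, h2⟩ else 0
  wmid := fun t i j => if h2 : (i:ℕ) < ν then
      (if h3 : (j:ℕ) < ν then net.wmid t ⟨i, h2⟩ ⟨j, h3⟩ else 0) else 0
  bmid := fun t i => if h2 : (i:ℕ) < ν then net.bmid t ⟨i, h2⟩ else 0
  wout := fun l j => if h3 : (j:ℕ) < ν then net.wout l ⟨j, h3⟩ else 0
  bout := net.bout

lemma MLP.pad_hidden {L ν m k : ℕ} (net : MLP L ν m k) {ν' : ℕ} (h : ν ≤ ν') (x : Fin m → ℝ) :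
    ∀ i : Fin ν', (net.pad ν' h).hidden x i
      = if h2 : (i:ℕ) < ν then net.hidden x ⟨i, h2⟩ else sigmoid 0 := by
  have main := foldl_rel
    (R := fun (v' : Fin ν' → ℝ) (v : Fin ν → ℝ) =>
      ∀ i : Fin ν', v' i = if h2 : (i:ℕ) < ν then v ⟨i, h2⟩ else sigmoid 0)
    (f := fun v i => fun j => sigmoid (((net.pad ν' h).wmid i).mulVec v j + (net.pad ν' h).bmid i j))
    (g := fun v i => fun j => sigmoid ((net.wmid i).mulVec v j + net.bmid i j))
    ?_ (List.finRange (L-1))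
    (fun j => sigmoid ((net.pad ν' h).w1.mulVec x j + (net.pad ν' h).b1 j))
    (fun j => sigmoid (net.w1.mulVec x j + net.b1 j))
    ?_
  · exact main
  · -- step preservation
    intro v' v t hrel i
    by_cases h2 : (i:ℕ) < ν
    · rw [dif_pos h2]
      show sigmoid (((net.pad ν' h).wmid t).mulVec v' i + (net.pad ν' h).bmid t i)
          = sigmoid ((net.wmid t).mulVec v ⟨i, h2⟩ + net.bmid t ⟨i, h2⟩)
      have hrow : ∀ j : Fin ν', ((net.pad ν' h).wmid t) i j * v' j
          = (if h3 : (j:ℕ) < ν then net.wmid t ⟨i, h2⟩ ⟨j, h3⟩ * v ⟨j, h3⟩ else 0) := by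
        intro j
        by_cases h3 : (j:ℕ) < ν
        · rw [hrel j, dif_pos h3, dif_pos h3]
          show (if h2' : (i:ℕ) < ν then
              (if h3' : (j:ℕ) < ν then net.wmid t ⟨i, h2'⟩ ⟨j, h3'⟩ else 0) else 0) * v ⟨j, h3⟩ = _
          rw [dif_pos h2, dif_pos h3]
        · rw [dif_neg h3]
          show (if h2' : (i:ℕ) < ν then
              (if h3' : (j:ℕ) < ν then net.wmid t ⟨i, h2'⟩ ⟨j, h3'⟩ else 0) else 0) * v' j = 0
          rw [dif_pos h2, dif_neg h3, zero_mul]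
      have hmv : ((net.pad ν' h).wmid t).mulVec v' i = (net.wmid t).mulVec v ⟨i, h2⟩ := by
        show ∑ j, ((net.pad ν' h).wmid t) i j * v' j = ∑ j, (net.wmid t) ⟨i, h2⟩ j * v j
        rw [Finset.sum_congr rfl (fun j _ => hrow j)]
        exact sum_dite_padded h (fun j => net.wmid t ⟨i, h2⟩ j * v j)
      rw [hmv]
      congr 1
      show _ + (if h2' : (i:ℕ) < ν then net.bmid t ⟨i, h2'⟩ else 0) = _
      rw [dif_pos h2]
    · rw [dif_neg h2]
      show sigmoid (((net.pad ν' h).wmid t).mulVec v' i + (net.pad ν' h).bmid t i) = sigmoid 0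
      have hmv : ((net.pad ν' h).wmid t).mulVec v' i = 0 := by
        show ∑ j, ((net.pad ν' h).wmid t) i j * v' j = 0
        apply Finset.sum_eq_zero
        intro j _
        show (if h2' : (i:ℕ) < ν then
            (if h3' : (j:ℕ) < ν then net.wmid t ⟨i, h2'⟩ ⟨j, h3'⟩ else 0) else 0) * v' j = 0
        rw [dif_neg h2, zero_mul]
      rw [hmv]
      show sigmoid (0 + (if h2' : (i:ℕ) < ν then net.bmid t ⟨i, h2'⟩ else 0)) = sigmoid 0
      rw [dif_neg h2, add_zero]
  · -- init
    intro i
    by_cases h2 : (i:ℕ) < ν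
    · rw [dif_pos h2]
      show sigmoid ((net.pad ν' h).w1.mulVec x i + (net.pad ν' h).b1 i)
          = sigmoid (net.w1.mulVec x ⟨i, h2⟩ + net.b1 ⟨i, h2⟩)
      have hmv : (net.pad ν' h).w1.mulVec x i = net.w1.mulVec x ⟨i, h2⟩ := by
        show ∑ j, (net.pad ν' h).w1 i j * x j = ∑ j, net.w1 ⟨i, h2⟩ j * x j
        apply Finset.sum_congr rfl
        intro j _
        show (if h2' : (i:ℕ) < ν then net.w1 ⟨i, h2'⟩ j else 0) * x j = _
        rw [dif_pos h2]
      rw [hmv]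
      congr 1
      show _ + (if h2' : (i:ℕ) < ν then net.b1 ⟨i, h2'⟩ else 0) = _
      rw [dif_pos h2]
    · rw [dif_neg h2]
      show sigmoid ((net.pad ν' h).w1.mulVec x i + (net.pad ν' h).b1 i) = sigmoid 0
      have hmv : (net.pad ν' h).w1.mulVec x i = 0 := by
        show ∑ j, (net.pad ν' h).w1 i j * x j = 0
        apply Finset.sum_eq_zero
        intro j _
        show (if h2' : (i:ℕ) < ν then net.w1 ⟨i, h2'⟩ j else 0) * x j = 0
        rw [dif_neg h2, zero_mul]
      rw [hmv]
      show sigmoid (0 + (if h2' : (i:ℕ) < ν then net.b1 ⟨i, h2'⟩ else 0)) = sigmoid 0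
      rw [dif_neg h2, add_zero]

lemma MLP.pad_eval {L ν m k : ℕ} (net : MLP L ν m k) {ν' : ℕ} (h : ν ≤ ν') :
    (net.pad ν' h).eval = net.eval := by
  funext x l
  rw [MLP.eval_apply, MLP.eval_apply]
  congr 1
  have hterm : ∀ j : Fin ν', (net.pad ν' h).wout l j * (net.pad ν' h).hidden x j
      = (if h3 : (j:ℕ) < ν then net.wout l ⟨j, h3⟩ * net.hidden x ⟨j, h3⟩ else 0) := by
    intro j
    by_cases h3 : (j:ℕ) < ν
    · rw [dif_pos h3, MLP.pad_hidden net h x j, dif_pos h3]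
      show (if h3' : (j:ℕ) < ν then net.wout l ⟨j, h3'⟩ else 0) * _ = _
      rw [dif_pos h3]
    · rw [dif_neg h3]
      show (if h3' : (j:ℕ) < ν then net.wout l ⟨j, h3'⟩ else 0) * _ = 0
      rw [dif_neg h3, zero_mul]
  rw [Finset.sum_congr rfl (fun j _ => hterm j)]
  exact sum_dite_padded h (fun j => net.wout l j * net.hidden x j)

def RealD (L m k : ℕ) (F : (Fin m → ℝ) → Fin k → ℝ) : Prop :=
  ∃ (ν : ℕ) (net : MLP L ν m k), F = net.eval

lemma Real1.realD {m k : ℕ} {F : (Fin m → ℝ) → Fin k → ℝ} (h : Real1 m k F) :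
    RealD 1 m k F := by
  obtain ⟨n, A, w, b, c, rfl⟩ := h
  refine ⟨n, ⟨fun i j => w i j, b, fun t => t.elim0, fun t => t.elim0, fun l i => A l i, c⟩, ?_⟩
  funext x l
  show _ = MLP.eval _ x l
  simp [MLP.eval, Matrix.mulVec, dotProduct]

/-- stack a one-hidden-layer net on top of a depth `S+1` net of equal width. -/
def mlpStack {S m p k W : ℕ} (net1 : MLP (S+1) W m p) (A' : Fin k → Fin W → ℝ)
    (w' : Fin W → Fin p → ℝ) (b' : Fin W → ℝ) (c : Fin k → ℝ) : MLP (S+2) W m k where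
  w1 := net1.w1
  b1 := net1.b1
  wmid := fun t => if h2 : (t:ℕ) < S then net1.wmid ⟨t.1, h2⟩
      else fun i j => ∑ q, w' i q * net1.wout q j
  bmid := fun t => if h2 : (t:ℕ) < S then net1.bmid ⟨t.1, h2⟩
      else fun i => (∑ q, w' i q * net1.bout q) + b' i
  wout := fun l i => A' l i
  bout := c

lemma mlpStack_eval {S m p k W : ℕ} (net1 : MLP (S+1) W m p) (A' : Fin k → Fin W → ℝ)
    (w' : Fin W → Fin p → ℝ) (b' : Fin W → ℝ) (c : Fin k → ℝ) (x : Fin m → ℝ) (l : Fin k) :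
    (mlpStack net1 A' w' b' c).eval x l
      = (∑ i, A' l i * sigmoid ((∑ q, w' i q * net1.eval x q) + b' i)) + c l := by
  set net2 := mlpStack net1 A' w' b' c with hnet2
  have hhid : ∀ i : Fin W, net2.hidden x i
      = sigmoid ((∑ q, w' i q * (net1.eval x q)) + b' i) := by
    intro i
    show (List.finRange (S+1)).foldl
        (fun v (t : Fin (S+1)) => fun j => sigmoid ((net2.wmid t).mulVec v j + net2.bmid t j))
        (fun j => sigmoid (net2.w1.mulVec x j + net2.b1 j)) i = _
    rw [List.finRange_succ_last, List.foldl_append, List.foldl_map]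
    have hstepagree :
        (fun (v : Fin W → ℝ) (t : Fin S) =>
          (fun j => sigmoid ((net2.wmid (Fin.castSucc t)).mulVec v j
            + net2.bmid (Fin.castSucc t) j)))
        = (fun (v : Fin W → ℝ) (t : Fin S) =>
          (fun j => sigmoid ((net1.wmid t).mulVec v j + net1.bmid t j))) := by
      funext v t j
      have h2 : ((Fin.castSucc t : Fin (S+1)) : ℕ) < S := t.2
      have e1 : net2.wmid (Fin.castSucc t) = net1.wmid t := dif_pos h2
      have e2 : net2.bmid (Fin.castSucc t) = net1.bmid t := dif_pos h2
      rw [e1, e2]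
    have hinit : (fun j => sigmoid (net2.w1.mulVec x j + net2.b1 j))
        = (fun j => sigmoid (net1.w1.mulVec x j + net1.b1 j)) := rfl
    rw [hinit, hstepagree]
    have hinner : (List.finRange S).foldl
        (fun (v : Fin W → ℝ) (t : Fin S) =>
          (fun j => sigmoid ((net1.wmid t).mulVec v j + net1.bmid t j)))
        (fun j => sigmoid (net1.w1.mulVec x j + net1.b1 j)) = net1.hidden x := rfl
    rw [hinner, List.foldl_cons, List.foldl_nil]
    have hlastw : net2.wmid (Fin.last S) = fun i j => ∑ q, w' i q * net1.wout q j :=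
      dif_neg (Nat.lt_irrefl S)
    have hlastb : net2.bmid (Fin.last S)
        = fun i => (∑ q, w' i q * net1.bout q) + b' i := dif_neg (Nat.lt_irrefl S)
    show sigmoid ((net2.wmid (Fin.last S)).mulVec (net1.hidden x) i
        + net2.bmid (Fin.last S) i) = _
    rw [hlastw, hlastb]
    congr 1
    show (∑ j, (∑ q, w' i q * net1.wout q j) * net1.hidden x j)
        + ((∑ q, w' i q * net1.bout q) + b' i)
        = (∑ q, w' i q * net1.eval x q) + b' i
    have e1 : ∑ j, (∑ q, w' i q * net1.wout q j) * net1.hidden x j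
        = ∑ q, ∑ j, w' i q * net1.wout q j * net1.hidden x j := by
      calc ∑ j, (∑ q, w' i q * net1.wout q j) * net1.hidden x j
          = ∑ j, ∑ q, w' i q * net1.wout q j * net1.hidden x j :=
            Finset.sum_congr rfl fun j _ => Finset.sum_mul _ _ _
        _ = ∑ q, ∑ j, w' i q * net1.wout q j * net1.hidden x j := Finset.sum_comm
    rw [e1, ← add_assoc, ← Finset.sum_add_distrib]
    congr 1
    apply Finset.sum_congr rfl
    intro q _
    rw [MLP.eval_apply, mul_add, Finset.mul_sum]
    simp only [mul_assoc]
  rw [MLP.eval_apply]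
  have hwout : ∀ j, net2.wout l j = A' l j := fun j => rfl
  have hbout : net2.bout l = c l := rfl
  rw [hbout]
  congr 1
  apply Finset.sum_congr rfl
  intro j _
  rw [hwout j, hhid j]

lemma RealD.comp {S m p k : ℕ} {F : (Fin m → ℝ) → Fin p → ℝ} {G : (Fin p → ℝ) → Fin k → ℝ}
    (hF : RealD (S+1) m p F) (hG : Real1 p k G) :
    RealD (S+2) m k (fun x => G (F x)) := by
  classical
  obtain ⟨ν1, net0, rfl⟩ := hF
  obtain ⟨n, A, w, b, c, rfl⟩ := hG
  set W := max ν1 n with hW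
  have hν1W : ν1 ≤ W := le_max_left _ _
  have hnW : n ≤ W := le_max_right _ _
  set A' : Fin k → Fin W → ℝ := fun l i => if h2 : (i:ℕ) < n then A l ⟨i, h2⟩ else 0 with hA'
  set w' : Fin W → Fin p → ℝ := fun i q => if h2 : (i:ℕ) < n then w ⟨i, h2⟩ q else 0 with hw'
  set b' : Fin W → ℝ := fun i => if h2 : (i:ℕ) < n then b ⟨i, h2⟩ else 0 with hb'
  refine ⟨W, mlpStack (net0.pad W hν1W) A' w' b' c, ?_⟩
  funext x l
  rw [mlpStack_eval, MLP.pad_eval]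
  show (∑ i, A l i * sigmoid ((∑ j, w i j * net0.eval x j) + b i)) + c l = _
  congr 1
  have hterm : ∀ j : Fin W, A' l j * sigmoid ((∑ q, w' j q * net0.eval x q) + b' j)
      = (if h2 : (j:ℕ) < n then
          A l ⟨j, h2⟩ * sigmoid ((∑ q, w ⟨j, h2⟩ q * net0.eval x q) + b ⟨j, h2⟩) else 0) := by
    intro j
    by_cases h2 : (j:ℕ) < n
    · rw [dif_pos h2]
      have hwj : w' j = w ⟨j, h2⟩ := by funext q; exact dif_pos h2
      have hbj : b' j = b ⟨j, h2⟩ := dif_pos h2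
      have hAj : A' l j = A l ⟨j, h2⟩ := dif_pos h2
      rw [hwj, hbj, hAj]
    · rw [dif_neg h2]
      have hAj : A' l j = 0 := dif_neg h2
      rw [hAj, zero_mul]
  rw [Finset.sum_congr rfl (fun j _ => hterm j),
    sum_dite_padded hnW (fun i => A l i * sigmoid ((∑ q, w i q * net0.eval x q) + b i))]

lemma MLP.continuous_eval {L ν m k : ℕ} (net : MLP L ν m k) : Continuous net.eval := by
  have hhid : Continuous (fun x => net.hidden x) := by
    unfold MLP.hidden
    have main : ∀ (l : List (Fin (L-1))) (v : (Fin m → ℝ) → Fin ν → ℝ), Continuous v →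
        Continuous (fun x => l.foldl
          (fun v i => fun j => sigmoid ((net.wmid i).mulVec v j + net.bmid i j)) (v x)) := by
      intro l
      induction l with
      | nil => intro v hv; exact hv
      | cons t ts ih =>
          intro v hv
          simp only [List.foldl_cons]
          apply ih
          apply continuous_pi
          intro j
          apply continuous_sigmoid'.comp
          apply Continuous.add _ continuous_const
          show Continuous fun x => ∑ q, (net.wmid t) j q * v x q
          apply continuous_finset_sum
          intro q _
          exact continuous_const.mul ((continuous_apply q).comp hv)
    apply main
    apply continuous_pi
    intro j
    apply continuous_sigmoid'.comp
    apply Continuous.add _ continuous_const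
    have e : (fun x : Fin m → ℝ => net.w1.mulVec x j) = fun x => ∑ q, net.w1 j q * x q := rfl
    rw [e]
    apply continuous_finset_sum
    intro q _
    exact continuous_const.mul (continuous_apply q)
  apply continuous_pi
  intro l
  have : (fun x => net.eval x l)
      = fun x => (∑ j, net.wout l j * net.hidden x j) + net.bout l := by
    funext x; exact MLP.eval_apply net x l
  rw [this]
  apply Continuous.add _ continuous_const
  apply continuous_finset_sum
  intro j _
  exact continuous_const.mul ((continuous_apply j).comp hhid)

lemma realD_dense (S : ℕ) : ∀ (m d : ℕ) (K : Set (Fin m → ℝ)), IsCompact K →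
    ∀ (g : (Fin m → ℝ) → Fin d → ℝ), Continuous g → ∀ {ε : ℝ}, 0 < ε →
    ∃ F, RealD (S+1) m d F ∧ ∀ x ∈ K, ∀ l, |F x l - g x l| ≤ ε := by
  induction S with
  | zero =>
      intro m d K hK g hg ε hε
      obtain ⟨F, hF, hb⟩ := real1_dense hK g hg hε
      exact ⟨F, hF.realD, hb⟩
  | succ S ih =>
      intro m d K hK g hg ε hε
      set K' := Metric.cthickening 1 K with hK'def
      have hK' : IsCompact K' := hK.cthickening
      have hgu : UniformContinuousOn g K' := hK'.uniformContinuousOn_of_continuous hg.continuousOn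
      rw [Metric.uniformContinuousOn_iff] at hgu
      obtain ⟨δ0, hδ0, hδ⟩ := hgu (ε/2) (half_pos hε)
      set δ : ℝ := min (δ0/2) 1 with hδdef
      have hδpos : 0 < δ := lt_min (half_pos hδ0) one_pos
      obtain ⟨F1, hF1R, hF1⟩ := ih m m K hK (fun x => x) continuous_id hδpos
      obtain ⟨G, hGR, hG⟩ := real1_dense hK' g hg (half_pos hε)
      refine ⟨fun x => G (F1 x), hF1R.comp hGR, ?_⟩
      intro x hx l
      have hdist : dist (F1 x) x ≤ δ := by
        rw [dist_pi_le_iff hδpos.le]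
        intro b
        rw [Real.dist_eq]
        exact hF1 x hx b
      have hxK' : x ∈ K' := Metric.self_subset_cthickening K hx
      have hmem : F1 x ∈ K' :=
        Metric.mem_cthickening_of_dist_le (F1 x) x 1 K hx
          (le_trans hdist (min_le_right _ _))
      calc |G (F1 x) l - g x l|
          ≤ |G (F1 x) l - g (F1 x) l| + |g (F1 x) l - g x l| := abs_sub_le _ _ _
        _ ≤ ε/2 + ε/2 := by
            apply add_le_add (hG (F1 x) hmem l)
            have h1 : dist (g (F1 x) l) (g x l) ≤ dist (g (F1 x)) (g x) :=
              dist_le_pi_dist _ _ l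
            have h2 : dist (g (F1 x)) (g x) < ε/2 := by
              apply hδ _ hmem _ hxK'
              calc dist (F1 x) x ≤ δ := hdist
                _ ≤ δ0/2 := min_le_left _ _
                _ < δ0 := by linarith
            rw [Real.dist_eq] at h1
            linarith
        _ = ε := add_halves ε

lemma approx_cont_in_measure {m d : ℕ} (μ : Measure (Fin m → ℝ)) [IsFiniteMeasure μ]
    (f : (Fin m → ℝ) → Fin d → ℝ) (hf : Measurable f) {ε : ℝ} (hε : 0 < ε)
    {η : ℝ≥0∞} (hη : η ≠ 0) :
    ∃ g : (Fin m → ℝ) → Fin d → ℝ, Continuous g ∧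
      μ {x | ε ≤ dist (g x) (f x)} ≤ η := by
  -- truncation level
  have htail : ∃ M : ℕ, μ {x | (M:ℝ) < ‖f x‖} ≤ η / 2 := by
    set s : ℕ → Set (Fin m → ℝ) := fun M => {x | (M:ℝ) < ‖f x‖} with hs
    have hmeas : ∀ M : ℕ, NullMeasurableSet (s M) μ := fun M =>
      (measurableSet_lt measurable_const hf.norm).nullMeasurableSet
    have hanti : Antitone s := by
      intro M N hMN x hx
      have hx' : (N:ℝ) < ‖f x‖ := hx
      exact lt_of_le_of_lt (by exact_mod_cast hMN) hx'
    have hempty : (⋂ M, s M) = ∅ := by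
      ext x
      simp only [Set.mem_iInter, Set.mem_empty_iff_false, iff_false, not_forall]
      obtain ⟨M, hMx⟩ := exists_nat_gt ‖f x‖
      exact ⟨M, by simp [hs, not_lt.2 hMx.le]⟩
    have htendsto := tendsto_measure_iInter_atTop hmeas hanti ⟨0, measure_ne_top μ _⟩
    rw [hempty] at htendsto
    simp only [measure_empty] at htendsto
    obtain ⟨M, hM⟩ := (htendsto.eventually_lt_const (ENNReal.half_pos hη)).exists
    exact ⟨M, hM.le⟩
  obtain ⟨M, hM⟩ := htail
  -- clamp
  set fM : (Fin m → ℝ) → Fin d → ℝ :=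
    fun x i => max (-(M:ℝ)) (min (M:ℝ) (f x i)) with hfM
  have hfMmeas : Measurable fM :=
    measurable_pi_iff.2 fun i =>
      measurable_const.max (measurable_const.min ((measurable_pi_apply i).comp hf))
  have hfMbd : ∀ x, ‖fM x‖ ≤ (M:ℝ) := by
    intro x
    apply pi_norm_le_iff_of_nonneg (by positivity) |>.2
    intro i
    rw [Real.norm_eq_abs, abs_le]
    constructor
    · exact le_max_left _ _
    · exact max_le (by simp) (min_le_left _ _)
  have hfMeq : {x | fM x ≠ f x} ⊆ {x | (M:ℝ) < ‖f x‖} := by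
    intro x hx
    by_contra hc
    apply hx
    have hnorm : ‖f x‖ ≤ (M:ℝ) := not_lt.1 hc
    funext i
    have h1 : ‖f x i‖ ≤ (M:ℝ) := le_trans (norm_le_pi_norm (f x) i) hnorm
    rw [Real.norm_eq_abs, abs_le] at h1
    show max (-(M:ℝ)) (min (M:ℝ) (f x i)) = f x i
    rw [min_eq_right h1.2, max_eq_right h1.1]
  have hfMlp : MemLp fM 1 μ :=
    MemLp.of_bound hfMmeas.aestronglyMeasurable (M:ℝ)
      (Filter.Eventually.of_forall hfMbd)
  -- continuous approximation in L¹
  have hbudget : (η / 2) * ENNReal.ofReal ε ≠ 0 := by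
    apply mul_ne_zero
    · simpa using (ENNReal.half_pos hη).ne'
    · simpa using (ENNReal.ofReal_pos.2 hε).ne'
  obtain ⟨g, _, hsnorm, hgcont, _⟩ :=
    hfMlp.exists_hasCompactSupport_eLpNorm_sub_le ENNReal.one_ne_top hbudget
  refine ⟨g, hgcont, ?_⟩
  -- Markov
  have hmarkov : μ {x | ENNReal.ofReal ε ≤ ‖(fM - g) x‖₊} ≤ η / 2 := by
    have haem : AEStronglyMeasurable (fM - g) μ :=
      (hfMmeas.sub hgcont.measurable).aestronglyMeasurable
    have h1 := meas_ge_le_mul_pow_eLpNorm_enorm μ one_ne_zero ENNReal.one_ne_top haem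
      (ε := ENNReal.ofReal ε) (by simpa using (ENNReal.ofReal_pos.2 hε).ne')
      (fun h => absurd h ENNReal.ofReal_ne_top)
    simp only [ENNReal.toReal_one, ENNReal.rpow_one, pow_one] at h1
    calc μ {x | ENNReal.ofReal ε ≤ ‖(fM - g) x‖₊}
        ≤ (ENNReal.ofReal ε)⁻¹ * eLpNorm (fM - g) 1 μ := h1
      _ ≤ (ENNReal.ofReal ε)⁻¹ * ((η / 2) * ENNReal.ofReal ε) := by
          exact mul_le_mul_right hsnorm _
      _ = η / 2 := by
          rw [mul_comm (η/2) _, ← mul_assoc,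
            ENNReal.inv_mul_cancel (by simpa using (ENNReal.ofReal_pos.2 hε).ne')
              ENNReal.ofReal_ne_top, one_mul]
  -- combine
  have hsubset : {x | ε ≤ dist (g x) (f x)}
      ⊆ {x | (M:ℝ) < ‖f x‖} ∪ {x | ENNReal.ofReal ε ≤ ‖(fM - g) x‖₊} := by
    intro x hx
    by_cases hc : fM x = f x
    · right
      have : ε ≤ ‖fM x - g x‖ := by
        rw [hc, ← dist_eq_norm, dist_comm]
        exact hx
      show ENNReal.ofReal ε ≤ (‖(fM - g) x‖₊ : ℝ≥0∞)
      rw [← enorm_eq_nnnorm, ← ofReal_norm]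
      exact ENNReal.ofReal_le_ofReal (by simpa [Pi.sub_apply] using this)
    · left
      exact hfMeq hc
  calc μ {x | ε ≤ dist (g x) (f x)}
      ≤ μ ({x | (M:ℝ) < ‖f x‖} ∪ {x | ENNReal.ofReal ε ≤ ‖(fM - g) x‖₊}) :=
        measure_mono hsubset
    _ ≤ μ {x | (M:ℝ) < ‖f x‖} + μ {x | ENNReal.ofReal ε ≤ ‖(fM - g) x‖₊} :=
        measure_union_le _ _
    _ ≤ η / 2 + η / 2 := add_le_add hM hmarkov
    _ = η := ENNReal.add_halves η

lemma approx_in_measure {m d : ℕ} (μ : Measure (Fin m → ℝ)) [IsFiniteMeasure μ]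
    (f : (Fin m → ℝ) → Fin d → ℝ) (hf : Measurable f) (S : ℕ)
    {ε : ℝ} (hε : 0 < ε) {η : ℝ≥0∞} (hη : η ≠ 0) :
    ∃ F, RealD (S+1) m d F ∧ μ {x | ε ≤ dist (F x) (f x)} ≤ η := by
  obtain ⟨g, hgcont, hg⟩ := approx_cont_in_measure μ f hf (half_pos hε)
    (ENNReal.half_pos hη).ne'
  have htight : ∃ R : ℕ, μ (Metric.closedBall (0 : Fin m → ℝ) R)ᶜ ≤ η/2 := by
    set s : ℕ → Set (Fin m → ℝ) := fun R => (Metric.closedBall (0 : Fin m → ℝ) R)ᶜ with hs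
    have hmeas : ∀ R : ℕ, NullMeasurableSet (s R) μ := fun R =>
      (Metric.isClosed_closedBall.measurableSet.compl).nullMeasurableSet
    have hanti : Antitone s := by
      intro a b hab
      apply Set.compl_subset_compl.2
      exact Metric.closedBall_subset_closedBall (by exact_mod_cast hab)
    have hempty : (⋂ R, s R) = ∅ := by
      ext x
      simp only [Set.mem_iInter, Set.mem_empty_iff_false, iff_false, not_forall]
      obtain ⟨R, hR⟩ := exists_nat_gt ‖x‖
      refine ⟨R, ?_⟩
      simp only [hs, Set.mem_compl_iff, Metric.mem_closedBall, not_not]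
      rw [dist_zero_right]
      exact hR.le
    have htendsto := tendsto_measure_iInter_atTop hmeas hanti ⟨0, measure_ne_top μ _⟩
    rw [hempty] at htendsto
    simp only [measure_empty] at htendsto
    obtain ⟨R, hR⟩ := (htendsto.eventually_lt_const (ENNReal.half_pos hη)).exists
    exact ⟨R, hR.le⟩
  obtain ⟨R, hR⟩ := htight
  have hKcomp : IsCompact (Metric.closedBall (0 : Fin m → ℝ) R) :=
    isCompact_closedBall _ _
  obtain ⟨F, hFD, hFb⟩ := realD_dense S m d _ hKcomp g hgcont
    (show (0:ℝ) < ε/4 by linarith)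
  refine ⟨F, hFD, ?_⟩
  have hsub : {x | ε ≤ dist (F x) (f x)}
      ⊆ (Metric.closedBall (0 : Fin m → ℝ) R)ᶜ ∪ {x | ε/2 ≤ dist (g x) (f x)} := by
    intro x hx
    have hx' : ε ≤ dist (F x) (f x) := hx
    by_cases hmem : x ∈ Metric.closedBall (0 : Fin m → ℝ) R
    · right
      by_contra hc
      have hc' : dist (g x) (f x) < ε/2 := not_le.1 hc
      have h1 : dist (F x) (g x) ≤ ε/4 := by
        rw [dist_pi_le_iff (by linarith)]
        intro l
        rw [Real.dist_eq]
        exact hFb x hmem l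
      have : dist (F x) (f x) < ε :=
        lt_of_le_of_lt (dist_triangle (F x) (g x) (f x)) (by linarith)
      exact absurd hx' (not_le.2 this)
    · left
      exact hmem
  calc μ {x | ε ≤ dist (F x) (f x)}
      ≤ μ ((Metric.closedBall (0 : Fin m → ℝ) R)ᶜ ∪ {x | ε/2 ≤ dist (g x) (f x)}) :=
        measure_mono hsub
    _ ≤ μ (Metric.closedBall (0 : Fin m → ℝ) R)ᶜ + μ {x | ε/2 ≤ dist (g x) (f x)} :=
        measure_union_le _ _
    _ ≤ η/2 + η/2 := add_le_add hR hg
    _ = η := ENNReal.add_halves η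

end NNAux

/-- Composition with a.s.-continuous maps: if `ψ` is continuous at `f (X)` almost
surely, then there are FNNs `F n ∈ Q_n` with `ψ (F n (X)) → ψ (f (X))` in
probability. -/
theorem nn_composition_as_continuous
    {Ω : Type*} [MeasurableSpace Ω] (P : Measure Ω) [IsProbabilityMeasure P]
    (ν₀ d k : ℕ)
    (X : Ω → (Fin ν₀ → ℝ)) (hX : Measurable X)
    (f : (Fin ν₀ → ℝ) → (Fin d → ℝ)) (hf : Measurable f)
    (ψ : (Fin d → ℝ) → (Fin k → ℝ)) (hψ : Measurable ψ)
    (hD : P {ω | f (X ω) ∈ {y : Fin d → ℝ | ¬ ContinuousAt ψ y}} = 0)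
    (L : ℕ) (hL : 1 ≤ L)
    (ν : ℕ → ℕ) (hν : StrictMono ν) (hν' : Tendsto ν atTop atTop) :
    ∃ F : ℕ → ((Fin ν₀ → ℝ) → (Fin d → ℝ)),
      (∀ n, InQ L ν n ν₀ d (F n)) ∧
      ∀ ε : ℝ, 0 < ε →
        Tendsto (fun n => P {ω | ε < ‖ψ (F n (X ω)) - ψ (f (X ω))‖}) atTop (nhds 0) := by
  classical
  obtain ⟨S, rfl⟩ : ∃ S, L = S + 1 := ⟨L - 1, by omega⟩
  set μ := P.map X with hμdef
  haveI : IsProbabilityMeasure μ := Measure.isProbabilityMeasure_map hX.aemeasurable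
  have hApprox : ∀ j : ℕ, ∃ (u : ℕ) (net : MLP (S+1) u ν₀ d),
      μ {x | 1/(j+1 : ℝ) ≤ dist (net.eval x) (f x)} ≤ ((j : ℝ≥0∞) + 1)⁻¹ := by
    intro j
    have hεj : (0:ℝ) < 1/(j+1) := by positivity
    have hηj : ((j : ℝ≥0∞) + 1)⁻¹ ≠ 0 :=
      ENNReal.inv_ne_zero.2 (by simp [ENNReal.add_eq_top])
    obtain ⟨F, hFD, hFb⟩ := approx_in_measure μ f hf S hεj hηj
    obtain ⟨u, net, rfl⟩ := hFD
    exact ⟨u, net, hFb⟩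
  choose u net hnet using hApprox
  set Wm : ℕ → ℕ := fun j => (Finset.range (j+1)).sup u with hWmdef
  have hWmono : Monotone Wm := fun a b hab =>
    Finset.sup_mono (Finset.range_subset_range.2 (by omega))
  have huW : ∀ j, u j ≤ Wm j := fun j => Finset.le_sup (Finset.self_mem_range_succ j)
  set jn : ℕ → ℕ := fun nn => Nat.findGreatest (fun j => Wm j ≤ ν nn) nn with hjndef
  set Fn : ℕ → ((Fin ν₀ → ℝ) → (Fin d → ℝ)) := fun nn =>
    if h : Wm (jn nn) ≤ ν nn then
      ((net (jn nn)).pad (ν nn) (le_trans (huW _) h)).eval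
    else (⟨0, 0, fun _ => 0, fun _ => 0, 0, 0⟩ : MLP (S+1) (ν nn) ν₀ d).eval with hFndef
  have hQ : ∀ nn, ∃ netq : MLP (S+1) (ν nn) ν₀ d, Fn nn = netq.eval := by
    intro nn
    by_cases h : Wm (jn nn) ≤ ν nn
    · exact ⟨(net (jn nn)).pad (ν nn) (le_trans (huW _) h),
        by simp only [hFndef]; rw [dif_pos h]⟩
    · exact ⟨⟨0, 0, fun _ => 0, fun _ => 0, 0, 0⟩,
        by simp only [hFndef]; rw [dif_neg h]⟩
  have hFc : ∀ nn, Continuous (Fn nn) := by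
    intro nn
    obtain ⟨q, hq⟩ := hQ nn
    rw [hq]
    exact q.continuous_eval
  have hmeasset : ∀ (G : (Fin ν₀ → ℝ) → (Fin d → ℝ)), Continuous G → ∀ (ε' : ℝ),
      MeasurableSet {x | ε' ≤ dist (G x) (f x)} :=
    fun G hG ε' => measurableSet_le measurable_const (hG.measurable.dist hf)
  -- convergence in probability of Fn ∘ X to f ∘ X
  have hTIM : ∀ ε' : ℝ, 0 < ε' →
      Tendsto (fun nn => P {ω | ε' ≤ dist (Fn nn (X ω)) (f (X ω))}) atTop (nhds 0) := by
    intro ε' hε'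
    rw [ENNReal.tendsto_atTop_zero]
    intro η hη
    obtain ⟨J1, hJ1⟩ := ENNReal.exists_inv_nat_lt hη.ne'
    obtain ⟨J2, hJ2⟩ := exists_nat_one_div_lt hε'
    set J := max J1 J2 with hJdef
    obtain ⟨N1, hN1⟩ := Filter.eventually_atTop.1 (hν'.eventually_ge_atTop (Wm J))
    refine ⟨max N1 J, ?_⟩
    intro nn hnn
    have hP : Wm J ≤ ν nn := hN1 nn (le_trans (le_max_left _ _) hnn)
    have hJle : J ≤ nn := le_trans (le_max_right _ _) hnn
    have hjge : J ≤ jn nn := Nat.le_findGreatest (P := fun j => Wm j ≤ ν nn) hJle hP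
    have hspec : Wm (jn nn) ≤ ν nn := Nat.findGreatest_spec (P := fun j => Wm j ≤ ν nn) hJle hP
    have hFeq : Fn nn = (net (jn nn)).eval := by
      simp only [hFndef]
      rw [dif_pos hspec, MLP.pad_eval]
    set j := jn nn with hjdef
    have hset : {ω | ε' ≤ dist (Fn nn (X ω)) (f (X ω))}
        = X ⁻¹' {x | ε' ≤ dist ((net j).eval x) (f x)} := by
      rw [hFeq]; rfl
    have hsub : {x | ε' ≤ dist ((net j).eval x) (f x)}
        ⊆ {x | 1/(j+1 : ℝ) ≤ dist ((net j).eval x) (f x)} := by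
      intro x hx
      have hx' : ε' ≤ dist ((net j).eval x) (f x) := hx
      show 1/(j+1 : ℝ) ≤ dist ((net j).eval x) (f x)
      refine le_trans ?_ hx'
      have h1 : 1/(j+1 : ℝ) ≤ 1/(J2+1 : ℝ) := by
        apply one_div_le_one_div_of_le (by positivity)
        have : (J2 : ℝ) ≤ (j : ℝ) := by
          exact_mod_cast le_trans (le_max_right J1 J2) hjge
        linarith
      linarith
    calc P {ω | ε' ≤ dist (Fn nn (X ω)) (f (X ω))}
        = μ {x | ε' ≤ dist ((net j).eval x) (f x)} := by
          rw [hset, hμdef, Measure.map_apply hX (hmeasset _ (net j).continuous_eval ε')]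
      _ ≤ μ {x | 1/(j+1 : ℝ) ≤ dist ((net j).eval x) (f x)} := measure_mono hsub
      _ ≤ ((j : ℝ≥0∞) + 1)⁻¹ := hnet j
      _ ≤ ((J1 : ℝ≥0∞))⁻¹ := by
          apply ENNReal.inv_le_inv.2
          have h1 : J1 ≤ J := le_max_left _ _
          have h2 : (J1 : ℕ) ≤ j + 1 := by omega
          exact_mod_cast h2
      _ ≤ η := hJ1.le
  -- continuous mapping step
  refine ⟨Fn, fun n => hQ n, ?_⟩
  intro ε hε
  have hae : ∀ᵐ ω ∂P, ContinuousAt ψ (f (X ω)) := by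
    rw [ae_iff]
    exact hD
  apply Filter.tendsto_of_subseq_tendsto
  intro ns hns
  have hsubTIM : TendstoInMeasure P (fun i ω => Fn (ns i) (X ω)) atTop
      (fun ω => f (X ω)) := by
    rw [tendstoInMeasure_iff_dist]
    intro ε' hε'
    exact (hTIM ε' hε').comp hns
  obtain ⟨ms, _, haeconv⟩ := hsubTIM.exists_seq_tendsto_ae
  refine ⟨ms, ?_⟩
  have hae2 : ∀ᵐ ω ∂P,
      Tendsto (fun i => ψ (Fn (ns (ms i)) (X ω))) atTop (nhds (ψ (f (X ω)))) := by
    filter_upwards [haeconv, hae] with ω h1 h2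
    exact h2.tendsto.comp h1
  have hmeas2 : ∀ i, AEStronglyMeasurable (fun ω => ψ (Fn (ns (ms i)) (X ω))) P := by
    intro i
    exact (hψ.comp ((hFc (ns (ms i))).measurable.comp hX)).aestronglyMeasurable
  have h3 := tendstoInMeasure_iff_dist.1 (tendstoInMeasure_of_tendsto_ae hmeas2 hae2)
  have h4 := h3 ε hε
  apply tendsto_of_tendsto_of_tendsto_of_le_of_le tendsto_const_nhds h4
  · intro i
    exact zero_le
  · intro i
    apply measure_mono
    intro ω hω
    have hω' : ε < ‖ψ (Fn (ns (ms i)) (X ω)) - ψ (f (X ω))‖ := hω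
    show ε ≤ dist (ψ (Fn (ns (ms i)) (X ω))) (ψ (f (X ω)))
    rw [dist_eq_norm]
    exact hω'.le
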